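/- If Q and Q+ΔQ are m×n real matrices with orthonormal columns and leverage scores ℓ_j, ℓ̃_j respectively, then for each j with ℓ_j > 0, |ℓ̃_j − ℓ_j|/ℓ_j ≤ (2√((1−ℓ_j)/ℓ_j) + ‖ΔQ‖₂/ℓ_j) ‖ΔQ‖₂. -/

import Mathlib

open Matrix

/-- Spectral (two-)norm of a real rectangular matrix. -/
noncomputable def spec {m n : ℕ} (A : Matrix (Fin m) (Fin n) ℝ) : ℝ :=
  ‖LinearMap.toContinuousLinearMap (Matrix.toEuclideanLin A)‖

/-- Frobenius norm. -/
noncomputable def frob {m n : ℕ} (A : Matrix (Fin m) (Fin n) ℝ) : ℝ :=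
  Real.sqrt (∑ i, ∑ j, (A i j) ^ 2)

/-- Leverage score: squared Euclidean norm of the j-th row. -/
noncomputable def lev {m n : ℕ} (Q : Matrix (Fin m) (Fin n) ℝ) (j : Fin m) : ℝ :=
  ∑ k, (Q j k) ^ 2

/-- Euclidean norm of the j-th row. -/
noncomputable def rnorm {m n : ℕ} (A : Matrix (Fin m) (Fin n) ℝ) (j : Fin m) : ℝ :=
  Real.sqrt (∑ k, (A j k) ^ 2)

/-- Moore–Penrose inverse of a full column rank matrix. -/
noncomputable def pinv {m n : ℕ} (A : Matrix (Fin m) (Fin n) ℝ) : Matrix (Fin n) (Fin m) ℝ :=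
  (Aᵀ * A)⁻¹ * Aᵀ

lemma spec_mulVec_le {m n : ℕ} (A : Matrix (Fin m) (Fin n) ℝ) (x : Fin n → ℝ) :
    Real.sqrt (∑ i, (A *ᵥ x) i ^ 2) ≤ spec A * Real.sqrt (∑ k, x k ^ 2) := by
  have h := (LinearMap.toContinuousLinearMap (Matrix.toEuclideanLin A)).le_opNorm
    ((WithLp.equiv 2 (Fin n → ℝ)).symm x)
  simp only [LinearMap.coe_toContinuousLinearMap'] at h
  rw [WithLp.equiv_symm_apply, Matrix.toEuclideanLin_apply_piLp_toLp] at h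
  rw [EuclideanSpace.norm_eq, EuclideanSpace.norm_eq] at h
  simpa [spec, Real.norm_eq_abs, sq_abs] using h

lemma dot_le {p : ℕ} (x y : Fin p → ℝ) :
    x ⬝ᵥ y ≤ Real.sqrt (∑ i, x i ^ 2) * Real.sqrt (∑ i, y i ^ 2) := by
  have h := Finset.sum_mul_sq_le_sq_mul_sq Finset.univ x y
  have h2 : x ⬝ᵥ y ≤ |∑ i, x i * y i| := by simp [dotProduct, le_abs_self]
  calc x ⬝ᵥ y ≤ |∑ i, x i * y i| := h2
    _ ≤ Real.sqrt (∑ i, x i ^ 2) * Real.sqrt (∑ i, y i ^ 2) := by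
        rw [← Real.sqrt_sq_eq_abs, ← Real.sqrt_mul (by positivity)]
        exact Real.sqrt_le_sqrt h

lemma abs_dot_le {p : ℕ} (x y : Fin p → ℝ) :
    |x ⬝ᵥ y| ≤ Real.sqrt (∑ i, x i ^ 2) * Real.sqrt (∑ i, y i ^ 2) := by
  rcases abs_cases (x ⬝ᵥ y) with ⟨h, _⟩ | ⟨h, _⟩
  · rw [h]; exact dot_le x y
  · rw [h]
    have := dot_le (-x) y
    simpa [neg_dotProduct, neg_pow] using this

lemma dot_mulVec_mulVec {m n p : ℕ} (A : Matrix (Fin m) (Fin n) ℝ)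
    (B : Matrix (Fin m) (Fin p) ℝ) (x : Fin n → ℝ) (y : Fin p → ℝ) :
    (A *ᵥ x) ⬝ᵥ (B *ᵥ y) = x ⬝ᵥ ((Aᵀ * B) *ᵥ y) := by
  rw [← Matrix.mulVec_mulVec, Matrix.dotProduct_mulVec x, Matrix.vecMul_transpose]

lemma final_arith (L E d : ℝ) (hl : 0 < L) (hl1 : L ≤ 1) (hE0 : 0 ≤ E)
    (hkey : |d| ≤ 2 * (Real.sqrt (1 - L) * (E * Real.sqrt L)) + E ^ 2) :
    |d| / L ≤ (2 * Real.sqrt ((1 - L) / L) + E / L) * E := by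
  have h1l : (0:ℝ) ≤ 1 - L := by linarith
  have hsqL : Real.sqrt L * Real.sqrt L = L := Real.mul_self_sqrt hl.le
  have hsq : Real.sqrt ((1 - L) / L) * L = Real.sqrt (1 - L) * Real.sqrt L := by
    rw [Real.sqrt_div h1l, div_mul_eq_mul_div]
    rw [show Real.sqrt (1 - L) * L = Real.sqrt (1 - L) * Real.sqrt L * Real.sqrt L by
      rw [mul_assoc, hsqL]]
    rw [mul_div_assoc, div_self (Real.sqrt_pos.mpr hl).ne', mul_one]
  rw [div_le_iff₀ hl]
  have hexp : (2 * Real.sqrt ((1 - L) / L) + E / L) * E * L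
      = 2 * (Real.sqrt ((1 - L) / L) * L) * E + E ^ 2 := by
    field_simp
  rw [hexp, hsq]
  nlinarith [hkey, Real.sqrt_nonneg (1 - L), Real.sqrt_nonneg L]

set_option maxHeartbeats 1000000 in
theorem stmt12 {m n : ℕ} (Q ΔQ : Matrix (Fin m) (Fin n) ℝ)
    (hQ : Qᵀ * Q = 1) (hQt : (Q + ΔQ)ᵀ * (Q + ΔQ) = 1) :
    ∀ j, 0 < lev Q j →
      |lev (Q + ΔQ) j - lev Q j| / lev Q j ≤
        (2 * Real.sqrt ((1 - lev Q j) / lev Q j) + spec ΔQ / lev Q j) * spec ΔQ := by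
  intro j hl
  set ℓ := lev Q j with hℓdef
  set ε := spec ΔQ with hεdef
  have hε0 : 0 ≤ ε := norm_nonneg _
  -- matrix identity from orthonormality of both factors
  have hsum : Qᵀ * ΔQ + ΔQᵀ * Q + ΔQᵀ * ΔQ = 0 := by
    have h : Qᵀ * Q + (Qᵀ * ΔQ + ΔQᵀ * Q + ΔQᵀ * ΔQ) = 1 := by
      rw [← hQt, transpose_add, Matrix.add_mul, Matrix.mul_add, Matrix.mul_add]; abel
    rw [hQ, add_eq_left] at h
    exact h
  -- vectors
  set q : Fin n → ℝ := fun k => Q j k with hqdef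
  set δ : Fin n → ℝ := fun k => ΔQ j k with hδdef
  set e : Fin m → ℝ := fun i => if i = j then 1 else 0 with hedef
  set u : Fin m → ℝ := e - Q *ᵥ q with hudef
  have he : ∀ v : Fin m → ℝ, e ⬝ᵥ v = v j := by
    intro v
    simp [hedef, dotProduct, Finset.sum_ite_eq]
  -- basic dot product values
  have hqsum : (∑ k, q k ^ 2) = ℓ := by simp [hqdef, hℓdef, lev]
  have hqq : q ⬝ᵥ q = ℓ := by
    rw [← hqsum]; simp [dotProduct, pow_two]
  have hQq : (Q *ᵥ q) ⬝ᵥ (Q *ᵥ q) = ℓ := by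
    rw [dot_mulVec_mulVec, hQ, Matrix.one_mulVec, hqq]
  have heq : e ⬝ᵥ (Q *ᵥ q) = ℓ := by
    rw [he, ← hqsum]
    simp [Matrix.mulVec, dotProduct, hqdef, pow_two]
  have hee : e ⬝ᵥ e = 1 := by rw [he]; simp [hedef]
  have huu : u ⬝ᵥ u = 1 - ℓ := by
    rw [hudef, sub_dotProduct, dotProduct_sub, dotProduct_sub,
      hee, heq, hQq, dotProduct_comm (Q *ᵥ q) e, heq]
    ring
  have huu0 : 0 ≤ u ⬝ᵥ u := Finset.sum_nonneg fun i _ => mul_self_nonneg _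
  have hl1 : ℓ ≤ 1 := by rw [huu] at huu0; linarith
  -- scalar quantities
  set N : ℝ := (ΔQ *ᵥ q) ⬝ᵥ (ΔQ *ᵥ q) with hNdef
  set D : ℝ := ∑ k, δ k ^ 2 with hDdef
  set R : ℝ := u ⬝ᵥ (ΔQ *ᵥ q) with hRdef
  set T : ℝ := (Q *ᵥ q) ⬝ᵥ (ΔQ *ᵥ q) with hTdef
  have hN0 : 0 ≤ N := Finset.sum_nonneg fun i _ => mul_self_nonneg _
  have hD0 : 0 ≤ D := Finset.sum_nonneg fun i _ => sq_nonneg _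
  -- 2T + N = 0
  have hT : 2 * T + N = 0 := by
    have h1 : T = q ⬝ᵥ ((Qᵀ * ΔQ) *ᵥ q) := by rw [hTdef, dot_mulVec_mulVec]
    have h2 : T = q ⬝ᵥ ((ΔQᵀ * Q) *ᵥ q) := by
      rw [hTdef, dotProduct_comm, dot_mulVec_mulVec]
    have h3 : N = q ⬝ᵥ ((ΔQᵀ * ΔQ) *ᵥ q) := by rw [hNdef, dot_mulVec_mulVec]
    have h4 : T + T + N = q ⬝ᵥ ((Qᵀ * ΔQ + ΔQᵀ * Q + ΔQᵀ * ΔQ) *ᵥ q) := by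
      rw [Matrix.add_mulVec, Matrix.add_mulVec, dotProduct_add,
        dotProduct_add]
      rw [← h1, ← h2, ← h3]
    rw [hsum, Matrix.zero_mulVec, dotProduct_zero] at h4
    linarith
  -- decomposition of the leverage score difference
  have hΔQq : (ΔQ *ᵥ q) j = q ⬝ᵥ δ := by
    simp [Matrix.mulVec, dotProduct, hqdef, hδdef, mul_comm]
  have hlev : lev (Q + ΔQ) j - ℓ = 2 * (e ⬝ᵥ (ΔQ *ᵥ q)) + D := by
    rw [he, hΔQq, hℓdef]
    simp only [lev, Matrix.add_apply, hDdef, dotProduct]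
    rw [Finset.mul_sum, ← Finset.sum_add_distrib, ← Finset.sum_sub_distrib]
    refine Finset.sum_congr rfl fun k _ => ?_
    simp only [hqdef, hδdef]
    ring
  have hsplit : e ⬝ᵥ (ΔQ *ᵥ q) = R + T := by
    rw [hRdef, hudef, sub_dotProduct, hTdef]; ring
  have hmain : lev (Q + ΔQ) j - ℓ = 2 * R - N + D := by
    rw [hlev, hsplit]; linarith
  -- bounds
  have hNsum : N = ∑ i, ((ΔQ *ᵥ q) i) ^ 2 := by
    simp [hNdef, dotProduct, pow_two]
  have hNsqrt : Real.sqrt N ≤ ε * Real.sqrt ℓ := by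
    rw [hNsum]
    calc Real.sqrt (∑ i, ((ΔQ *ᵥ q) i) ^ 2) ≤ ε * Real.sqrt (∑ k, q k ^ 2) :=
          spec_mulVec_le ΔQ q
      _ = ε * Real.sqrt ℓ := by rw [hqsum]
  have hsqL : Real.sqrt ℓ * Real.sqrt ℓ = ℓ := Real.mul_self_sqrt hl.le
  have hN : N ≤ ε ^ 2 * ℓ := by
    nlinarith [Real.sqrt_nonneg N, Real.sqrt_nonneg ℓ, Real.sq_sqrt hN0,
      mul_self_le_mul_self (Real.sqrt_nonneg N) hNsqrt]
  -- bound on R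
  have husum : (∑ i, u i ^ 2) = 1 - ℓ := by
    rw [← huu]; simp [dotProduct, pow_two]
  have hR : |R| ≤ Real.sqrt (1 - ℓ) * (ε * Real.sqrt ℓ) := by
    calc |R| ≤ Real.sqrt (∑ i, u i ^ 2) * Real.sqrt (∑ i, ((ΔQ *ᵥ q) i) ^ 2) :=
          abs_dot_le u (ΔQ *ᵥ q)
      _ = Real.sqrt (1 - ℓ) * Real.sqrt N := by rw [husum, hNsum]
      _ ≤ Real.sqrt (1 - ℓ) * (ε * Real.sqrt ℓ) := by
          exact mul_le_mul_of_nonneg_left hNsqrt (Real.sqrt_nonneg _)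
  -- bound on D
  have hD : D ≤ ε ^ 2 := by
    have hDj : (ΔQ *ᵥ δ) j = D := by
      simp [Matrix.mulVec, dotProduct, hδdef, hDdef, pow_two]
    have h1 : D = e ⬝ᵥ (ΔQ *ᵥ δ) := by rw [he, hDj]
    have hesum : (∑ i, e i ^ 2) = 1 := by
      simp [hedef]
    have h2 : D ≤ Real.sqrt (∑ i, e i ^ 2) * Real.sqrt (∑ i, ((ΔQ *ᵥ δ) i) ^ 2) := by
      rw [h1]; exact dot_le e (ΔQ *ᵥ δ)
    rw [hesum, Real.sqrt_one, one_mul] at h2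
    have h3 : Real.sqrt (∑ i, ((ΔQ *ᵥ δ) i) ^ 2) ≤ ε * Real.sqrt D :=
      spec_mulVec_le ΔQ δ
    have h4 : D ≤ ε * Real.sqrt D := le_trans h2 h3
    nlinarith [Real.sq_sqrt hD0, Real.sqrt_nonneg D, sq_nonneg (Real.sqrt D - ε)]
  -- key inequality
  have hkey : |lev (Q + ΔQ) j - ℓ| ≤ 2 * (Real.sqrt (1 - ℓ) * (ε * Real.sqrt ℓ)) + ε ^ 2 := by
    rw [hmain]
    have hRa := abs_le.mp hR
    have hNe : N ≤ ε ^ 2 := by nlinarith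
    rw [abs_le]
    constructor <;> nlinarith
  exact final_arith ℓ ε _ hl hl1 hε0 hkey
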